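/- arXiv:1410.7083 — 5 statements merged into one kernel-verified Lean document; each statement's English description precedes it below -/
import Mathlib

section
/- Let \|x\|^2 > 0, d \ge 0, a > 0 be real numbers with d^2 \ge 4\|x\|^2 a, and suppose d \le \gamma a for some \gamma > 0 (where here we abstract \mathfrak{d}[x] = d, \mathfrak{a}_0[x] = a). Then both real roots p_\pm = (-d \pm \sqrt{d^2 - 4\|x\|^2 a})/(2\|x\|^2) of the quadratic \lambda^2\|x\|^2 + \lambda d + a satisfy p_\pm < -1/\gamma. -/
/-- scalar core of Lemma 5.5: both real roots of
`λ²b + λd + a` (with `b = ‖x‖² > 0`) are `< -1/γ`. -/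
theorem stmt_1 (b d a γ : ℝ) (hb : 0 < b) (hd : 0 ≤ d) (ha : 0 < a)
    (hdisc : d ^ 2 ≥ 4 * b * a) (hγ : 0 < γ) (hdγ : d ≤ γ * a) :
    (-d + Real.sqrt (d ^ 2 - 4 * b * a)) / (2 * b) < -1 / γ ∧
    (-d - Real.sqrt (d ^ 2 - 4 * b * a)) / (2 * b) < -1 / γ := by
  set s := Real.sqrt (d ^ 2 - 4 * b * a) with hs
  have hd0 : 0 < d := by nlinarith
  have hsq : s ^ 2 = d ^ 2 - 4 * b * a := Real.sq_sqrt (by nlinarith)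
  have hs0 : 0 ≤ s := Real.sqrt_nonneg _
  -- γ d ≥ 4 b, hence d*γ - 2b > 0
  have h1 : 0 < d * γ - 2 * b := by nlinarith
  -- key inequality: s * γ < d * γ - 2 b
  have hkey : s * γ < d * γ - 2 * b := by nlinarith [mul_nonneg hs0 hγ.le, mul_le_mul_of_nonneg_right hdγ hγ.le, sq_nonneg γ]
  have h2b : (0:ℝ) < 2 * b := by linarith
  constructor
  · rw [div_lt_div_iff₀ h2b hγ]
    nlinarith
  · rw [div_lt_div_iff₀ h2b hγ]
    nlinarith
end

section
/- Let H be a Hilbert space, A_0 self-adjoint positive definite with 0 \in \rho(A_0), and D : H_{1/2} \to H_{-1/2} bounded nonnegative as above. If \|A_0^{-1/2} D A_0^{-1/2}\| > 2\|A_0^{-1/2}\| (operator norms on H), then there exists x \in H_{1/2}, x \ne 0, with \mathfrak{d}[x] \ge 2\|x\|\sqrt{\mathfrak{a}_0[x]}, i.e. \mathcal{D}^* \ne \emptyset. -/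
/-- if `‖A₀^{-1/2} D A₀^{-1/2}‖ > 2‖A₀^{-1/2}‖` then `𝒟* ≠ ∅`,
i.e. there is a nonzero `x = A₀^{-1/2} y ∈ H_{1/2}` with `𝔡[x] ≥ 2‖x‖√(𝔞₀[x])`. -/
theorem stmt_3 {H : Type*} [NormedAddCommGroup H] [InnerProductSpace ℂ H] [CompleteSpace H]
    (Ainvhalf S : H →L[ℂ] H)
    (hAsa : IsSelfAdjoint Ainvhalf)
    (hAinj : Function.Injective Ainvhalf)
    (hApos : ∀ y : H, y ≠ 0 → 0 < (inner ℂ (Ainvhalf y) y : ℂ).re)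
    (hSsa : IsSelfAdjoint S)
    (hSpos : ∀ y : H, 0 ≤ (inner ℂ (S y) y : ℂ).re)
    (hnorm : 2 * ‖Ainvhalf‖ < ‖S‖) :
    ∃ y : H, y ≠ 0 ∧ 2 * ‖Ainvhalf y‖ * Real.sqrt (‖y‖ ^ 2) ≤ (inner ℂ (S y) y : ℂ).re := by
  have hsym : ∀ x y : H, (inner ℂ (S x) y : ℂ) = inner ℂ x (S y) :=
    ContinuousLinearMap.isSelfAdjoint_iff_isSymmetric.mp hSsa
  by_contra hcon
  push_neg at hcon
  set c : ℝ := 2 * ‖Ainvhalf‖ with hc_def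
  have hc : 0 ≤ c := by positivity
  -- numerical range bound
  have hb : ∀ y : H, (inner ℂ (S y) y : ℂ).re ≤ c * ‖y‖ ^ 2 := by
    intro y
    rcases eq_or_ne y 0 with rfl | hy
    · simp
    · have h1 : Real.sqrt (‖y‖ ^ 2) = ‖y‖ := Real.sqrt_sq (norm_nonneg y)
      have h2 := (hcon y hy).le
      rw [h1] at h2
      calc (inner ℂ (S y) y : ℂ).re ≤ 2 * ‖Ainvhalf y‖ * ‖y‖ := h2
        _ ≤ 2 * (‖Ainvhalf‖ * ‖y‖) * ‖y‖ := by
            gcongr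
            exact Ainvhalf.le_opNorm y
        _ = c * ‖y‖ ^ 2 := by ring
  -- Cauchy–Schwarz for the nonnegative form ⟨Sx, y⟩
  let C : PreInnerProductSpace.Core ℂ H :=
    { inner := fun x y => inner ℂ (S x) y
      conj_inner_symm := fun x y => by
        simp only [← inner_conj_symm (S y) x, starRingEnd_self_apply, hsym x y]
      re_inner_nonneg := fun x => hSpos x
      add_left := fun x y z => by simp [inner_add_left]
      smul_left := fun x y r => by simp [inner_smul_left, mul_comm] }
  have key : ∀ x y : H, ‖(inner ℂ (S x) y : ℂ)‖ * ‖(inner ℂ (S y) x : ℂ)‖ ≤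
      (inner ℂ (S x) x : ℂ).re * (inner ℂ (S y) y : ℂ).re := fun x y =>
    @InnerProductSpace.Core.inner_mul_inner_self_le ℂ H _ _ _ C x y
  -- deduce ‖S x‖ ≤ c ‖x‖
  have hSle : ‖S‖ ≤ c := by
    refine S.opNorm_le_bound hc fun x => ?_
    have h := key x (S x)
    have e1 : (inner ℂ (S (S x)) x : ℂ) = inner ℂ (S x) (S x) := hsym (S x) x ▸ hsym (S x) x
    rw [e1] at h
    have e2 : ‖(inner ℂ (S x) (S x) : ℂ)‖ = ‖S x‖ ^ 2 := by
      rw [← inner_self_re_eq_norm, inner_self_eq_norm_sq]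
    rw [e2] at h
    have h3 : (inner ℂ (S x) x : ℂ).re ≤ c * ‖x‖ ^ 2 := hb x
    have h4 : (inner ℂ (S (S x)) (S x) : ℂ).re ≤ c * ‖S x‖ ^ 2 := hb (S x)
    have h5 : ‖S x‖ ^ 2 * ‖S x‖ ^ 2 ≤ (c * ‖x‖ ^ 2) * (c * ‖S x‖ ^ 2) := by
      calc ‖S x‖ ^ 2 * ‖S x‖ ^ 2 ≤ (inner ℂ (S x) x : ℂ).re * (inner ℂ (S (S x)) (S x) : ℂ).re := h
        _ ≤ (c * ‖x‖ ^ 2) * (c * ‖S x‖ ^ 2) := by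
            apply mul_le_mul h3 h4 (hSpos (S x)) (by positivity)
    by_contra hlt
    push_neg at hlt
    have hcx : (0:ℝ) ≤ c * ‖x‖ := by positivity
    have hs : 0 < ‖S x‖ := lt_of_le_of_lt hcx hlt
    have hsub : 0 < ‖S x‖ - c * ‖x‖ := by linarith
    have hadd : 0 < ‖S x‖ + c * ‖x‖ := by linarith
    have hs2 : 0 < ‖S x‖ ^ 2 := by positivity
    nlinarith [mul_pos (mul_pos hsub hadd) hs2]
  linarith
end

section
/- Let H be a Hilbert space and let \mathfrak{a}_0, \mathfrak{d} be as in assumptions (F1)-(F2) with \mathfrak{d}[x] \le \gamma\,\mathfrak{a}_0[x] for all x in the form domain, where \gamma > 0. Let \lambda \in \mathbb{C} with \mathrm{Re}\,\lambda \ge -1/\gamma, \mathrm{Re}(\lambda^2) \ge 0, and at least one of these two inequalities strict. Then for every x \ne 0 in the form domain, \mathrm{Re}\big(\lambda^2\|x\|^2 + \lambda\,\mathfrak{d}[x] + \mathfrak{a}_0[x]\big) > 0; in particular \mathfrak{t}(\lambda)[x] \ne 0. -/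
/-- core estimate of Proposition 4.9: for `Re λ ≥ -1/γ`, `Re(λ²) ≥ 0`,
one of them strict, one has `Re(𝔱(λ)[x]) > 0` for every nonzero `x` in the form domain;
in particular `𝔱(λ)[x] ≠ 0`. -/
theorem stmt_4 {H : Type*} [NormedAddCommGroup H] [InnerProductSpace ℂ H]
    (Dm : Set H) (a0 d : H → ℝ) (γ : ℝ) (hγ : 0 < γ)
    (ha : ∀ x ∈ Dm, x ≠ 0 → 0 < a0 x)
    (hd : ∀ x ∈ Dm, 0 ≤ d x ∧ d x ≤ γ * a0 x)
    (l : ℂ) (h1 : -1 / γ ≤ l.re) (h2 : 0 ≤ (l ^ 2).re)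
    (hstrict : -1 / γ < l.re ∨ 0 < (l ^ 2).re) :
    ∀ x ∈ Dm, x ≠ 0 →
      0 < (l ^ 2 * (‖x‖ : ℂ) ^ 2 + l * (d x : ℂ) + (a0 x : ℂ)).re ∧
      l ^ 2 * (‖x‖ : ℂ) ^ 2 + l * (d x : ℂ) + (a0 x : ℂ) ≠ 0 := by
  intro x hx hx0
  obtain ⟨hd0, hdg⟩ := hd x hx
  have ha0 := ha x hx hx0
  have hn : 0 < ‖x‖ := norm_pos_iff.mpr hx0
  have hre : (l ^ 2 * (‖x‖ : ℂ) ^ 2 + l * (d x : ℂ) + (a0 x : ℂ)).re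
      = (l ^ 2).re * ‖x‖ ^ 2 + l.re * d x + a0 x := by
    simp [Complex.add_re, Complex.mul_re, ← Complex.ofReal_pow]
  have hda : d x / γ ≤ a0 x := by
    rw [div_le_iff₀ hγ]; linarith
  have key : 0 < (l ^ 2).re * ‖x‖ ^ 2 + l.re * d x + a0 x := by
    have hsq : 0 ≤ (l ^ 2).re * ‖x‖ ^ 2 := mul_nonneg h2 (sq_nonneg _)
    rcases hstrict with hs | hs
    · rcases eq_or_lt_of_le hd0 with hde | hdp
      · have : l.re * d x = 0 := by rw [← hde]; ring
        linarith
      · have : 0 < (l.re + 1 / γ) * d x := by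
          apply mul_pos _ hdp
          have : -1 / γ = -(1/γ) := by ring
          linarith [this ▸ hs]
        have : l.re * d x = (l.re + 1/γ) * d x - d x / γ := by ring
        nlinarith
    · have : 0 < (l ^ 2).re * ‖x‖ ^ 2 := mul_pos hs (pow_pos hn 2)
      have h1d : (-1/γ) * d x ≤ l.re * d x := mul_le_mul_of_nonneg_right h1 hd0
      have : (-1/γ) * d x = -(d x / γ) := by ring
      nlinarith
  refine ⟨hre ▸ key, fun h => ?_⟩
  have : (0:ℝ) < (0:ℂ).re := h ▸ hre ▸ key
  simp at this
end

section
/- Let H be a Hilbert space, A_0 self-adjoint with A_0 \ge c > 0 and 0 \in \rho(A_0), and D: H_{1/2} \to H_{-1/2} bounded nonnegative. Define the block operator \mathcal{A} = \begin{pmatrix} 0 & I \\ -A_0 & -D \end{pmatrix} on dom(\mathcal{A}) = \{(z,w) \in H_{1/2}\times H_{1/2} : A_0 z + Dw \in H\} in \mathcal{H} = H_{1/2}\times H. Then \mathcal{A} is boundedly invertible with inverse \mathcal{A}^{-1} = \begin{pmatrix} -A_0^{-1}D & -A_0^{-1} \\ I & 0\end{pmatrix} (where A_0^{-1}D acts in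 H_{1/2} and I is the embedding H_{1/2} \hookrightarrow H). -/
/-- the block operator `𝒜 = [[0, I], [-A₀, -D]]` on
`dom(𝒜) = {(z,w) ∈ H_{1/2} × H_{1/2} : A₀z + Dw ∈ H}` in `𝓗 = H_{1/2} × H` is
boundedly invertible with inverse `𝒜⁻¹ = [[-A₀⁻¹D, -A₀⁻¹], [I, 0]]`.
Setting: `Hh = H_{1/2}`, `Hsp = H`, `Hn = H_{-1/2}`; `ι : H_{1/2} ↪ H`,
`j : H ↪ H_{-1/2}` the embeddings, `A0 : H_{1/2} ≃ H_{-1/2}` the isometric extension,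
`P` the duality pairing of `H_{-1/2}` with `H_{1/2}` (restricting to the inner
product of `H`), `A₀ ≥ c > 0`, and `D` bounded nonnegative. -/
theorem stmt_14 {Hh Hsp Hn : Type*}
    [NormedAddCommGroup Hh] [InnerProductSpace ℂ Hh] [CompleteSpace Hh]
    [NormedAddCommGroup Hsp] [InnerProductSpace ℂ Hsp] [CompleteSpace Hsp]
    [NormedAddCommGroup Hn] [InnerProductSpace ℂ Hn] [CompleteSpace Hn]
    (A0 : Hh ≃L[ℂ] Hn) (hA0iso : ∀ z : Hh, ‖A0 z‖ = ‖z‖)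
    (ι : Hh →L[ℂ] Hsp) (j : Hsp →L[ℂ] Hn)
    (hι : Function.Injective ι) (hj : Function.Injective j)
    (P : Hn → Hh → ℂ)
    (hP : ∀ (h : Hsp) (y : Hh), P (j h) y = (inner ℂ (ι y) h : ℂ))
    (c : ℝ) (hc : 0 < c)
    (hA0pos : ∀ z : Hh, c * ‖z‖ ^ 2 ≤ (P (A0 z) z).re)
    (D : Hh →L[ℂ] Hn)
    (hDpos : ∀ z : Hh, 0 ≤ (P (D z) z).re) :
    -- `𝒜 ∘ 𝒜⁻¹ = I` on `𝓗 = H_{1/2} × H`: `𝒜⁻¹(u,v) = (-(A₀⁻¹(Du + jv)), u)` lies in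
    -- `dom(𝒜)` and is mapped by `𝒜` back to `(u,v)`
    (∀ (u : Hh) (v : Hsp),
      (∃ h : Hsp, j h = A0 (-(A0.symm (D u + j v))) + D u) ∧
      A0 (-(A0.symm (D u + j v))) + D u = -(j v)) ∧
    -- `𝒜⁻¹ ∘ 𝒜 = I` on `dom(𝒜)`
    (∀ z w : Hh, (∃ h : Hsp, j h = A0 z + D w) →
      ∀ h : Hsp, j h = -(A0 z + D w) → (-(A0.symm (D w + j h)), w) = (z, w)) ∧
    -- boundedness of the inverse in the norm of `𝓗 = H_{1/2} × H`
    (∃ M : ℝ, 0 ≤ M ∧ ∀ (u : Hh) (v : Hsp),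
      ‖-(A0.symm (D u + j v))‖ + ‖ι u‖ ≤ M * (‖u‖ + ‖v‖)) := by
  have hsymm : ∀ x : Hn, ‖A0.symm x‖ = ‖x‖ := by
    intro x; conv_rhs => rw [← A0.apply_symm_apply x]
    rw [hA0iso]
  refine ⟨?_, ?_, ?_⟩
  · intro u v
    have key : A0 (-(A0.symm (D u + j v))) + D u = -(j v) := by
      rw [map_neg, A0.apply_symm_apply]; abel
    exact ⟨⟨-v, by rw [map_neg, key]⟩, key⟩
  · intro z w _ h hh
    have : D w + j h = A0 (-z) := by rw [hh, map_neg]; abel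
    rw [this, A0.symm_apply_apply, neg_neg]
  · refine ⟨‖D‖ + ‖j‖ + ‖ι‖, by positivity, fun u v => ?_⟩
    have h1 : ‖-(A0.symm (D u + j v))‖ ≤ ‖D‖ * ‖u‖ + ‖j‖ * ‖v‖ := by
      rw [norm_neg, hsymm]
      exact (norm_add_le _ _).trans (add_le_add (D.le_opNorm u) (j.le_opNorm v))
    have h2 : ‖ι u‖ ≤ ‖ι‖ * ‖u‖ := ι.le_opNorm u
    have hv : (0:ℝ) ≤ ‖v‖ := norm_nonneg v
    have hu : (0:ℝ) ≤ ‖u‖ := norm_nonneg u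
    nlinarith [norm_nonneg (D : Hh →L[ℂ] Hn), norm_nonneg j, norm_nonneg ι]
end

section
/- Let \mathfrak{a}_0 and \mathfrak{d} satisfy (F1)-(F2) with \mathfrak{d} \ne 0, and let \gamma = \sup_{x\ne 0} \mathfrak{d}[x]/\mathfrak{a}_0[x] \in (0,\infty). Suppose \lambda is a real eigenvalue of the block operator \mathcal{A} (equivalently, \mathfrak{t}(\lambda)[x] = \lambda^2\|x\|^2 + \lambda\mathfrak{d}[x] + \mathfrak{a}_0[x] = 0 for some x \ne 0). Then \lambda < -1/\gamma. In particular, \mathcal{A} has no real eigenvalues in the interval [-1/\gamma, \infty). -/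
/-- with (F1)-(F2), `𝔡 ≠ 0` and `γ = sup_{x≠0} 𝔡[x]/𝔞₀[x] ∈ (0,∞)`,
every real eigenvalue `λ` of `𝒜` (equivalently, every real `λ` with
`𝔱(λ)[x] = λ²‖x‖² + λ𝔡[x] + 𝔞₀[x] = 0` for some `x ≠ 0`) satisfies `λ < -1/γ`;
in particular there are no real eigenvalues in `[-1/γ, ∞)`. -/
theorem stmt_19 {H : Type*} [NormedAddCommGroup H] [InnerProductSpace ℂ H]
    (Dm : Set H) (a0 d : H → ℝ) (c1 γ : ℝ) (hc1 : 0 < c1)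
    (ha : ∀ x ∈ Dm, c1 * ‖x‖ ^ 2 ≤ a0 x)
    (hdpos : ∀ x ∈ Dm, 0 ≤ d x)
    (hdne : ∃ x ∈ Dm, d x ≠ 0)
    (hγpos : 0 < γ)
    (hγ : IsLUB {r : ℝ | ∃ x ∈ Dm, x ≠ 0 ∧ r = d x / a0 x} γ) :
    ∀ lam : ℝ, ∀ x ∈ Dm, x ≠ 0 →
      lam ^ 2 * ‖x‖ ^ 2 + lam * d x + a0 x = 0 → lam < -1 / γ := by
  intro lam x hx hx0 heq
  by_contra h
  push_neg at h
  have hnx : 0 < ‖x‖ := norm_pos_iff.mpr hx0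
  have ha0 : 0 < a0 x := lt_of_lt_of_le (by positivity) (ha x hx)
  have hd : 0 ≤ d x := hdpos x hx
  have hmem : d x / a0 x ∈ {r : ℝ | ∃ x ∈ Dm, x ≠ 0 ∧ r = d x / a0 x} :=
    ⟨x, hx, hx0, rfl⟩
  have hdiv : d x / a0 x ≤ γ := hγ.1 hmem
  have hdle : d x ≤ γ * a0 x := (div_le_iff₀ ha0).mp hdiv
  have h1 : -1 ≤ lam * γ := by
    have := mul_le_mul_of_nonneg_right h hγpos.le
    rw [div_mul_cancel₀] at this
    · linarith
    · exact hγpos.ne'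
  rcases le_or_gt 0 lam with h0 | h0
  · nlinarith
  · nlinarith [mul_nonneg (neg_nonneg.mpr h0.le) (sub_nonneg.mpr hdle),
      mul_nonneg (by linarith : (0:ℝ) ≤ 1 + lam * γ) ha0.le,
      mul_pos (mul_pos_of_neg_of_neg h0 h0) (mul_pos hnx hnx)]
end
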